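/- Let $p$ be an odd prime, $r$ a positive integer, $u$ a positive integer, and $m$ a positive integer not divisible by $p$. Then for any integer $\ell$, the rational number $\sum 1/i$, summed over all integers $i$ with $1 \le i \le u m p^r$, $i \equiv \ell \pmod m$, and $\gcd(i,p)=1$, is congruent to $0$ modulo $p^r$. -/

import Mathlib

open Finset

theorem harmonic_arith_prog_vanishes
    (p r u m : ℕ) (ℓ : ℤ)
    (hp : p.Prime) (hpodd : Odd p) (hr : 0 < r) (hu : 0 < u)
    (hm : 0 < m) (hpm : ¬ p ∣ m) :
    (p : ℤ) ^ r ∣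
      ((∑ i ∈ (Finset.Icc 1 (u * m * p ^ r)).filter
          (fun i : ℕ => (i : ℤ) % (m : ℤ) = ℓ % (m : ℤ) ∧ Nat.Coprime i p),
        (1 : ℚ) / (i : ℚ))).num := by
  classical
  set M := m * p ^ r with hMdef
  have hP2 : 2 ≤ p ^ r := le_trans hp.two_le (Nat.le_self_pow hr.ne' p)
  have hM : 0 < M := Nat.mul_pos hm (by omega)
  have hpM : p ∣ M := Dvd.dvd.mul_left (dvd_pow_self p hr.ne') m
  have hprM : p ^ r ∣ M := Dvd.dvd.mul_left dvd_rfl m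
  have hmM : m ∣ M := Dvd.intro _ rfl
  have hcop : Nat.Coprime m (p ^ r) :=
    Nat.Coprime.pow_right r ((hp.coprime_iff_not_dvd).mpr hpm).symm
  obtain ⟨t, ht1, ht2⟩ := Nat.chineseRemainder hcop 1 (p ^ r - 1)
  -- facts about t
  have htp : ¬ p ∣ t := by
    intro hd
    have h1 : t % p = (p ^ r - 1) % p :=
      Nat.ModEq.of_dvd (dvd_pow_self p hr.ne') ht2
    have h0 : t % p = 0 := by
      obtain ⟨c, rfl⟩ := hd
      exact Nat.mul_mod_right p c
    have h2 : p ∣ p ^ r - 1 := Nat.dvd_of_mod_eq_zero (by omega)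
    have h3 : p ∣ p ^ r := dvd_pow_self p hr.ne'
    have h4 : p ∣ 1 := by
      have h5 := Nat.dvd_sub h3 h2
      have h6 : p ^ r - (p ^ r - 1) = 1 := by omega
      rwa [h6] at h5
    exact hp.ne_one (Nat.dvd_one.mp h4)
  have htZ2 : (t : ℤ) ≡ -1 [ZMOD ((p : ℤ) ^ r)] := by
    have h0 : (t : ℤ) ≡ ((p ^ r - 1 : ℕ) : ℤ) [ZMOD ((p ^ r : ℕ) : ℤ)] :=
      Int.natCast_modEq_iff.mpr ht2
    have hc : ((p ^ r - 1 : ℕ) : ℤ) = (p : ℤ) ^ r - 1 := by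
      push_cast [Nat.cast_sub (by omega : 1 ≤ p ^ r)]; ring
    have h1 : (t : ℤ) ≡ (p : ℤ) ^ r - 1 [ZMOD ((p : ℤ) ^ r)] := by
      rw [hc] at h0; exact_mod_cast h0
    exact h1.trans (Int.ModEq.symm ((Int.modEq_iff_dvd).mpr ⟨-1, by ring⟩)).symm
  have htsq : t * t ≡ 1 [MOD M] := by
    have h1 : t * t ≡ 1 [MOD m] := by simpa using ht1.mul ht1
    have h2 : t * t ≡ 1 [MOD p ^ r] := by
      refine (ht2.mul ht2).trans ?_
      obtain ⟨k, hk⟩ : ∃ k, p ^ r = k + 2 := ⟨p ^ r - 2, by omega⟩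
      rw [hk]
      have he : (k + 2 - 1) * (k + 2 - 1) = 1 + (k + 2) * k := by
        have : k + 2 - 1 = k + 1 := by omega
        rw [this]; ring
      show ((k + 2 - 1) * (k + 2 - 1)) % (k + 2) = 1 % (k + 2)
      rw [he]
      exact Nat.add_mul_mod_self_left 1 (k + 2) k
    exact (Nat.modEq_and_modEq_iff_modEq_mul hcop).mp ⟨h1, h2⟩
  -- the involution
  set σ : ℕ → ℕ := fun i => M * ((i - 1) / M) + (i * t) % M with hσdef
  have key : ∀ i : ℕ, 1 ≤ i → i ≤ u * m * p ^ r → ¬ p ∣ i →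
      (1 ≤ σ i ∧ σ i ≤ u * m * p ^ r ∧ σ i ≡ i [MOD m] ∧ ¬ p ∣ σ i ∧
        ((p : ℤ) ^ r ∣ ((i : ℤ) + (σ i : ℤ))) ∧ σ (σ i) = i) := by
    intro i h1 hiN hpi
    have hNM : u * m * p ^ r = u * M := mul_assoc u m (p ^ r)
    have hσi : σ i = M * ((i - 1) / M) + (i * t) % M := rfl
    have hq : (i - 1) / M < u := (Nat.div_lt_iff_lt_mul hM).mpr (by omega)
    have hrem_lt : (i * t) % M < M := Nat.mod_lt _ hM
    have hrem_pos : 1 ≤ (i * t) % M := by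
      rcases Nat.eq_zero_or_pos ((i * t) % M) with h | h
      · exfalso
        have hd : p ∣ i * t := dvd_trans hpM (Nat.dvd_of_mod_eq_zero h)
        rcases (Nat.Prime.dvd_mul hp).mp hd with h' | h'
        · exact hpi h'
        · exact htp h'
      · exact h
    have hmodM : σ i ≡ i * t [MOD M] := by
      have c0 : M * ((i - 1) / M) ≡ 0 [MOD M] :=
        (Nat.modEq_zero_iff_dvd).mpr ⟨(i - 1) / M, rfl⟩
      have c1 : σ i ≡ (i * t) % M [MOD M] := by rw [hσi]; simpa using c0.add_right ((i * t) % M)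
      exact c1.trans (Nat.mod_modEq (i * t) M)
    -- range
    have hb1 : 1 ≤ σ i := by rw [hσi]; omega
    have hb2 : σ i ≤ u * m * p ^ r := by
      have h6 : M * ((i - 1) / M) + (i * t) % M < M * ((i - 1) / M + 1) := by
        rw [Nat.mul_add, Nat.mul_one]
        exact Nat.add_lt_add_left hrem_lt _
      have h5 : M * ((i - 1) / M + 1) ≤ M * u := Nat.mul_le_mul_left M hq
      rw [hσi, hNM]
      exact le_of_lt (lt_of_lt_of_le h6 (h5.trans (le_of_eq (mul_comm M u))))
    -- mod m
    have hmodm : σ i ≡ i [MOD m] := by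
      have c2 : σ i ≡ i * t [MOD m] := hmodM.of_dvd hmM
      have c3 : i * t ≡ i * 1 [MOD m] := Nat.ModEq.mul_left i ht1
      simpa using c2.trans c3
    -- not divisible by p
    have hpσ : ¬ p ∣ σ i := by
      intro hd
      have c4 : σ i ≡ i * t [MOD p] := hmodM.of_dvd hpM
      have : (i * t) % p = 0 := by
        have := (Nat.modEq_zero_iff_dvd).mpr hd
        exact (c4.symm.trans this)
      rcases (Nat.Prime.dvd_mul hp).mp (Nat.dvd_of_mod_eq_zero this) with h' | h'
      · exact hpi h'
      · exact htp h'
    -- p^r divides i + σ i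
    have hdvd : (p : ℤ) ^ r ∣ ((i : ℤ) + (σ i : ℤ)) := by
      have c5 : σ i ≡ i * t [MOD p ^ r] := hmodM.of_dvd hprM
      have c6 : ((σ i : ℕ) : ℤ) ≡ ((i * t : ℕ) : ℤ) [ZMOD ((p ^ r : ℕ) : ℤ)] :=
        Int.natCast_modEq_iff.mpr c5
      have c7 : (σ i : ℤ) ≡ (i : ℤ) * t [ZMOD ((p : ℤ) ^ r)] := by
        push_cast at c6; exact_mod_cast c6
      have c8 : (σ i : ℤ) ≡ (i : ℤ) * (-1) [ZMOD ((p : ℤ) ^ r)] :=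
        c7.trans (Int.ModEq.mul_left (i : ℤ) htZ2)
      have c9 : ((i : ℤ) + (σ i : ℤ)) ≡ (i : ℤ) + (i : ℤ) * (-1) [ZMOD ((p : ℤ) ^ r)] :=
        Int.ModEq.add_left _ c8
      have c10 : ((i : ℤ) + (σ i : ℤ)) ≡ 0 [ZMOD ((p : ℤ) ^ r)] := by
        simpa using c9
      exact (Int.modEq_zero_iff_dvd).mp c10
    -- involution
    have hinv : σ (σ i) = i := by
      have e1 : M * ((i - 1) / M) + (i - 1) % M = i - 1 := Nat.div_add_mod (i - 1) M
      have hMi : ¬ M ∣ i := fun hd => hpi (hpM.trans hd)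
      have h8 : i % M ≠ 0 := fun h => hMi (Nat.dvd_of_mod_eq_zero h)
      have es : (i - 1) % M < M := Nat.mod_lt _ hM
      have hi_eq : i = M * ((i - 1) / M) + ((i - 1) % M + 1) := by omega
      have h7 : i % M = ((i - 1) % M + 1) % M := by
        conv_lhs => rw [hi_eq]
        exact Nat.mul_add_mod M ((i - 1) / M) ((i - 1) % M + 1)
      have f5 : i % M = (i - 1) % M + 1 := by
        rcases Nat.lt_or_ge ((i - 1) % M + 1) M with hlt | hge
        · rw [h7, Nat.mod_eq_of_lt hlt]
        · exfalso
          have : (i - 1) % M + 1 = M := by omega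
          rw [h7, this, Nat.mod_self] at h8
          exact h8 rfl
      have f3 : (σ i - 1) / M = (i - 1) / M := by
        have h31 : σ i - 1 = M * ((i - 1) / M) + ((i * t) % M - 1) :=
          by rw [hσi, Nat.add_sub_assoc hrem_pos]
        have h32 : (i * t) % M - 1 < M := lt_of_le_of_lt (Nat.sub_le _ _) hrem_lt
        rw [h31, Nat.mul_add_div hM, Nat.div_eq_of_lt h32, Nat.add_zero]
      have f4 : (σ i * t) % M = i % M := by
        have d1 : σ i * t ≡ i * t * t [MOD M] := hmodM.mul_right t
        have d2 : i * t * t ≡ i [MOD M] := by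
          rw [mul_assoc]
          simpa using Nat.ModEq.mul_left i htsq
        exact d1.trans d2
      have : σ (σ i) = M * ((σ i - 1) / M) + (σ i * t) % M := rfl
      rw [this, f3, f4, f5, ← Nat.add_assoc, e1]
      omega
    exact ⟨hb1, hb2, hmodm, hpσ, hdvd, hinv⟩
  -- now the sum
  set SS := (Finset.Icc 1 (u * m * p ^ r)).filter
      (fun i : ℕ => (i : ℤ) % (m : ℤ) = ℓ % (m : ℤ) ∧ Nat.Coprime i p) with hSS
  have hmemS : ∀ i ∈ SS, σ i ∈ SS ∧ σ (σ i) = i ∧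
      ((p : ℤ) ^ r ∣ ((i : ℤ) + (σ i : ℤ))) ∧ 1 ≤ i ∧ 1 ≤ σ i ∧ ¬ p ∣ i ∧ ¬ p ∣ σ i := by
    intro i hi
    rw [hSS, Finset.mem_filter, Finset.mem_Icc] at hi
    obtain ⟨⟨h1, h2⟩, h3, h4⟩ := hi
    have hpi : ¬ p ∣ i := (hp.coprime_iff_not_dvd).mp h4.symm
    obtain ⟨k1, k2, k3, k4, k5, k6⟩ := key i h1 h2 hpi
    have hσmem : σ i ∈ SS := by
      rw [hSS, Finset.mem_filter, Finset.mem_Icc]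
      refine ⟨⟨k1, k2⟩, ?_, ?_⟩
      · have : ((σ i : ℕ) : ℤ) ≡ (i : ℤ) [ZMOD ((m : ℕ) : ℤ)] :=
          Int.natCast_modEq_iff.mpr k3
        exact this.trans (show Int.ModEq (m : ℤ) (i : ℤ) ℓ from h3)
      · exact ((hp.coprime_iff_not_dvd).mpr k4).symm
    exact ⟨hσmem, k6, k5, h1, k1, hpi, k4⟩
  have hbij : ∑ i ∈ SS, (1 : ℚ) / ((σ i : ℕ) : ℚ) = ∑ i ∈ SS, (1 : ℚ) / (i : ℚ) := by
    refine Finset.sum_bij' (fun a _ => σ a) (fun a _ => σ a)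
      (fun a ha => (hmemS a ha).1) (fun a ha => (hmemS a ha).1)
      (fun a ha => (hmemS a ha).2.1) (fun a ha => (hmemS a ha).2.1)
      (fun a ha => rfl)
  set Q : ℚ := ∑ i ∈ SS, (1 : ℚ) / (i : ℚ) with hQ
  have hQQ : Q + Q = ∑ i ∈ SS, ((1 : ℚ) / (i : ℚ) + (1 : ℚ) / ((σ i : ℕ) : ℚ)) := by
    rw [Finset.sum_add_distrib, hbij]
  have hind : ∃ a b : ℤ, ¬ ((p : ℤ) ∣ b) ∧ ((p : ℤ) ^ r ∣ a) ∧ (Q + Q) * (b : ℚ) = (a : ℚ) := by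
    rw [hQQ]
    refine Finset.sum_induction _
      (fun x : ℚ => ∃ a b : ℤ, ¬ ((p : ℤ) ∣ b) ∧ ((p : ℤ) ^ r ∣ a) ∧ x * (b : ℚ) = (a : ℚ))
      ?_ ⟨0, 1, by
        intro h
        have h1 := Int.le_of_dvd one_pos h
        have h2 := hp.two_le
        omega, by simp, by simp⟩ ?_
    · rintro x y ⟨a1, b1, hb1, ha1, hx⟩ ⟨a2, b2, hb2, ha2, hy⟩
      refine ⟨a1 * b2 + a2 * b1, b1 * b2, ?_, ?_, ?_⟩
      · intro h
        rcases (Nat.prime_iff_prime_int.mp hp).dvd_mul.mp h with h' | h'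
        · exact hb1 h'
        · exact hb2 h' 
      · exact dvd_add (ha1.mul_right b2) (ha2.mul_right b1)
      · push_cast
        push_cast at hx hy
        linear_combination (b2 : ℚ) * hx + (b1 : ℚ) * hy
    · intro i hi
      obtain ⟨_, _, hdvd, h1, hσ1, hpi, hpσ⟩ := hmemS i hi
      refine ⟨(i : ℤ) + (σ i : ℤ), (i : ℤ) * (σ i : ℤ), ?_, hdvd, ?_⟩
      · intro h
        rcases (Nat.prime_iff_prime_int.mp hp).dvd_mul.mp h with h' | h'
        · exact hpi (Int.natCast_dvd_natCast.mp h')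
        · exact hpσ (Int.natCast_dvd_natCast.mp h')
      · have hi0 : ((i : ℕ) : ℚ) ≠ 0 := Nat.cast_ne_zero.mpr (by omega)
        have hσ0 : ((σ i : ℕ) : ℚ) ≠ 0 := Nat.cast_ne_zero.mpr (by omega)
        push_cast
        field_simp
        ring
  obtain ⟨a, b, hb, ha, habb⟩ := hind
  have hb2 : ¬ (p : ℤ) ∣ 2 * b := by
    intro h
    rcases (Nat.prime_iff_prime_int.mp hp).dvd_mul.mp h with h' | h'
    · have : p ∣ 2 := by exact_mod_cast h'
      have := (Nat.prime_dvd_prime_iff_eq hp Nat.prime_two).mp this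
      rw [this] at hpodd
      exact ((Nat.not_odd_iff_even.mpr even_two)) hpodd
    · exact hb h'
  have habb2 : Q * ((2 * b : ℤ) : ℚ) = (a : ℚ) := by
    push_cast
    push_cast at habb
    linear_combination habb
  have hden : ((Q.den : ℕ) : ℚ) ≠ 0 := Nat.cast_ne_zero.mpr Q.den_nz
  have e : (Q.num : ℚ) = Q * (Q.den : ℚ) := (div_eq_iff hden).mp (Rat.num_div_den Q)
  have hnumq : (Q.num : ℚ) * ((2 * b : ℤ) : ℚ) = (a : ℚ) * (Q.den : ℚ) := by
    rw [e]
    calc Q * (Q.den : ℚ) * ((2 * b : ℤ) : ℚ) = Q * ((2 * b : ℤ) : ℚ) * (Q.den : ℚ) := by ring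
      _ = (a : ℚ) * (Q.den : ℚ) := by rw [habb2]
  have hnum : Q.num * (2 * b) = a * (Q.den : ℤ) := by exact_mod_cast hnumq
  have hdvd2 : (p : ℤ) ^ r ∣ Q.num * (2 * b) := hnum ▸ (ha.mul_right _)
  exact (Nat.prime_iff_prime_int.mp hp).pow_dvd_of_dvd_mul_right r hb2 hdvd2
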